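/- Suppose s satisfies the cubic first-order condition ∇f(x) + ∇²f(x)s + (σ/2)‖s‖s = 0 and the Hessian of f is L_H-Lipschitz on the segment [x, x + s]. Then ‖∇f(x + s)‖ ≤ ½(σ + L_H)‖s‖². -/

import Mathlib

open scoped RealInnerProductSpace
open Set

/-- If s satisfies the cubic first-order condition ∇f(x) + ∇²f(x)s + (σ/2)‖s‖s = 0
and the Hessian of f is L_H-Lipschitz on the segment [x, x + s], then
‖∇f(x + s)‖ ≤ ½(σ + L_H)‖s‖². -/
theorem stmt5 {d : ℕ} (f : EuclideanSpace ℝ (Fin d) → ℝ) (hf : ContDiff ℝ 2 f)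
    (x s : EuclideanSpace ℝ (Fin d)) (σ LH : ℝ) (hσ : 0 < σ)
    (hLip : ∀ u ∈ segment ℝ x (x + s), ∀ v ∈ segment ℝ x (x + s),
      ‖fderiv ℝ (gradient f) u - fderiv ℝ (gradient f) v‖ ≤ LH * ‖u - v‖)
    (hfoc : gradient f x + fderiv ℝ (gradient f) x s + (σ / 2 * ‖s‖) • s = 0) :
    ‖gradient f (x + s)‖ ≤ 1 / 2 * (σ + LH) * ‖s‖ ^ 2 := by
  set g := gradient f with hg
  have hgC : ContDiff ℝ 1 g := by
    have : g = fun x => (InnerProductSpace.toDual ℝ _).symm (fderiv ℝ f x) := rfl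
    rw [this]
    exact (InnerProductSpace.toDual ℝ _).symm.contDiff.comp (hf.fderiv_right (by norm_num))
  have hgd : Differentiable ℝ g := hgC.differentiable one_ne_zero
  set A := fderiv ℝ g x with hA
  -- h t = g(x + t•s) - g x - t • (A s)
  set h : ℝ → EuclideanSpace ℝ (Fin d) := fun t => g (x + t • s) - g x - t • (A s) with hh
  have hmem : ∀ t ∈ Icc (0:ℝ) 1, x + t • s ∈ segment ℝ x (x + s) := by
    intro t ht
    refine ⟨1 - t, t, by linarith [ht.2], ht.1, by ring_nf, ?_⟩
    module
  have hderiv : ∀ t : ℝ, HasDerivAt h (fderiv ℝ g (x + t • s) s - A s) t := by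
    intro t
    have h1 : HasDerivAt (fun t : ℝ => x + t • s) s t := by
      simpa using ((hasDerivAt_id t).smul_const s).const_add x
    have h2 : HasDerivAt (fun t : ℝ => g (x + t • s)) (fderiv ℝ g (x + t • s) s) t :=
      (hgd _).hasFDerivAt.comp_hasDerivAt t h1
    have h5 := (h2.sub_const (g x)).sub ((hasDerivAt_id t).smul_const (A s))
    rw [one_smul] at h5
    exact h5
  have key : ‖h 1‖ ≤ LH / 2 * ‖s‖ ^ 2 := by
    have := image_norm_le_of_norm_deriv_right_le_deriv_boundary
      (f := h) (f' := fun t => fderiv ℝ g (x + t • s) s - A s) (a := 0) (b := 1)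
      (B := fun t => LH * ‖s‖ ^ 2 / 2 * t ^ 2) (B' := fun t => LH * ‖s‖ ^ 2 * t)
      (fun t _ => (hderiv t).continuousAt.continuousWithinAt)
      (fun t ht => (hderiv t).hasDerivWithinAt)
      (by simp [hh]) (fun t => by
        have h4 := (hasDerivAt_pow 2 t).const_mul (LH * ‖s‖ ^ 2 / 2)
        norm_num at h4
        rw [show LH * ‖s‖ ^ 2 / 2 * (2 * t) = LH * ‖s‖ ^ 2 * t by ring] at h4
        exact h4)
      (fun t ht => ?_) (right_mem_Icc.2 zero_le_one)
    · calc ‖h 1‖ ≤ LH * ‖s‖ ^ 2 / 2 * 1 ^ 2 := this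
        _ = LH / 2 * ‖s‖ ^ 2 := by ring
    · have hts : x + t • s ∈ segment ℝ x (x + s) := hmem t ⟨ht.1, ht.2.le⟩
      have hxs : x ∈ segment ℝ x (x + s) := left_mem_segment ℝ x (x + s)
      have h3 : ‖fderiv ℝ g (x + t • s) - A‖ ≤ LH * ‖t • s‖ := by
        have := hLip _ hts _ hxs
        rwa [add_sub_cancel_left] at this
      calc ‖fderiv ℝ g (x + t • s) s - A s‖
          = ‖(fderiv ℝ g (x + t • s) - A) s‖ := by simp
        _ ≤ ‖fderiv ℝ g (x + t • s) - A‖ * ‖s‖ :=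
            (fderiv ℝ g (x + t • s) - A).le_opNorm s
        _ ≤ LH * ‖t • s‖ * ‖s‖ := by
            exact mul_le_mul_of_nonneg_right h3 (norm_nonneg s)
        _ = LH * ‖s‖ ^ 2 * |t| := by
            rw [norm_smul]; simp [Real.norm_eq_abs]; ring
        _ = LH * ‖s‖ ^ 2 * t := by rw [abs_of_nonneg ht.1]
  -- combine
  have hfoc' : g x + A s = -((σ / 2 * ‖s‖) • s) := by
    linear_combination (norm := module) hfoc
  have hdecomp : g (x + s) = h 1 + (g x + A s) := by
    simp only [hh, one_smul]
    abel
  calc ‖g (x + s)‖ ≤ ‖h 1‖ + ‖g x + A s‖ := by rw [hdecomp]; exact norm_add_le _ _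
    _ ≤ LH / 2 * ‖s‖ ^ 2 + σ / 2 * ‖s‖ ^ 2 := by
        refine add_le_add key ?_
        rw [hfoc', norm_neg, norm_smul]
        have : ‖σ / 2 * ‖s‖‖ = σ / 2 * ‖s‖ := abs_of_nonneg (by positivity)
        rw [this]; ring_nf; rfl
    _ = 1 / 2 * (σ + LH) * ‖s‖ ^ 2 := by ring
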